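/- arXiv:1910.13545 — 3 statements merged into one kernel-verified Lean document; each statement's English description precedes it below -/
import Mathlib

section
/- For every α ∈ {0,1,…,n}, every commutative ring R, and every z ∈ R, the matrix g_α(z) satisfies g_α(z)ᵀ · J · g_α(z) = J and det g_α(z) = 1, where J is the N×N matrix with 1's on the antidiagonal and 0's elsewhere. In particular each g_α(z) lies in SO(2n+2) with respect to the quadratic form J. -/
open Matrix MvPolynomial

/-- For `1 ≤ α ≤ n`, the `(2n+2) × (2n+2)` identity matrix modified by replacing the
`2 × 2` diagonal block in rows/columns `{α, α+1}` (1-based) by `[[-z,1],[1,0]]` and the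
`2 × 2` diagonal block in rows/columns `{2n+2-α, 2n+3-α}` by `[[z,1],[1,0]]`; for
`α = 0`, the identity matrix with the central `4 × 4` diagonal block in rows/columns
`{n, n+1, n+2, n+3}` replaced by `[[-z,0,1,0],[0,z,0,1],[1,0,0,0],[0,1,0,0]]`. -/
def gMat {R : Type*} [CommRing R] (n : ℕ) (α : ℕ) (z : R) :
    Matrix (Fin (2 * n + 2)) (Fin (2 * n + 2)) R :=
  Matrix.of fun i j =>
    let i' := (i : ℕ) + 1
    let j' := (j : ℕ) + 1
    if α = 0 then
      if i' = n ∧ j' = n then -z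
      else if i' = n + 1 ∧ j' = n + 1 then z
      else if (i' = n ∧ j' = n + 2) ∨ (i' = n + 1 ∧ j' = n + 3) ∨
              (i' = n + 2 ∧ j' = n) ∨ (i' = n + 3 ∧ j' = n + 1) then 1
      else if i' = j' ∧ ¬(i' = n ∨ i' = n + 1 ∨ i' = n + 2 ∨ i' = n + 3) then 1
      else 0
    else
      if i' = α ∧ j' = α then -z
      else if i' = 2 * n + 2 - α ∧ j' = 2 * n + 2 - α then z
      else if (i' = α ∧ j' = α + 1) ∨ (i' = α + 1 ∧ j' = α) ∨
              (i' = 2 * n + 2 - α ∧ j' = 2 * n + 3 - α) ∨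
              (i' = 2 * n + 3 - α ∧ j' = 2 * n + 2 - α) then 1
      else if i' = j' ∧
          ¬(i' = α ∨ i' = α + 1 ∨ i' = 2 * n + 2 - α ∨ i' = 2 * n + 3 - α) then 1
      else 0

/-- The descending word `(a, a-1, …, b)`. -/
def descWord (a b : ℕ) : List ℕ := (List.range (a + 1 - b)).reverse.map (· + b)

/-- The ascending word `(a, a+1, …, b)`. -/
def ascWord (a b : ℕ) : List ℕ := (List.range (b + 1 - a)).map (· + a)

/-- `Q_1 = (0, n-1, n-2, …, 2, 1, 2, 3, …, n-1, 0)`. -/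
def wordQ1 (n : ℕ) : List ℕ := 0 :: (descWord (n - 1) 1 ++ ascWord 2 (n - 1) ++ [0])

/-- `Q_2 = (n, n-1, …, 2, 1, 2, …, n-1, n)`. -/
def wordQ2 (n : ℕ) : List ℕ := descWord n 1 ++ ascWord 2 n

/-- `Q^{(i)} = (i, i-1, …, 1, 2, 3, …, n-1, 0, n, n-1, …, i+1)`. -/
def wordQi (n i : ℕ) : List ℕ :=
  descWord i 1 ++ ascWord 2 (n - 1) ++ [0] ++ descWord n (i + 1)

/-- `M_Q = g_{α_1}(z_1) · g_{α_2}(z_2) ⋯ g_{α_L}(z_L)` over `ℤ[z_1, z_2, …]`,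
where `z_j` is the variable `X j`. -/
noncomputable def MQ (n : ℕ) (Q : List ℕ) :
    Matrix (Fin (2 * n + 2)) (Fin (2 * n + 2)) (MvPolynomial ℕ ℤ) :=
  (List.ofFn (fun l : Fin Q.length => gMat n (Q.get l) (X ((l : ℕ) + 1)))).prod

/-- The determinant of the northwest `α × α` submatrix. -/
noncomputable def nwDet {n : ℕ}
    (M : Matrix (Fin (2 * n + 2)) (Fin (2 * n + 2)) (MvPolynomial ℕ ℤ))
    (α : ℕ) (h : α ≤ 2 * n + 2) : MvPolynomial ℕ ℤ :=
  (M.submatrix (Fin.castLE h) (Fin.castLE h)).det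

/-- The `(2n+2) × (2n+2)` matrix with `1`'s on the antidiagonal and `0`'s elsewhere. -/
def antidiagJ (n : ℕ) (R : Type*) [CommRing R] :
    Matrix (Fin (2 * n + 2)) (Fin (2 * n + 2)) R :=
  Matrix.of fun i j => if (i : ℕ) + (j : ℕ) = 2 * n + 1 then 1 else 0

namespace GAux

variable {m : ℕ} {R : Type*} [CommRing R]

/-- Generic building-block matrix. -/
def gAux (p q r s : Fin m) (z : R) : Matrix (Fin m) (Fin m) R :=
  Matrix.of fun i j =>
    if i = p ∧ j = p then -z
    else if i = r ∧ j = r then z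
    else if (i = p ∧ j = q) ∨ (i = q ∧ j = p) ∨ (i = r ∧ j = s) ∨ (i = s ∧ j = r) then 1
    else if i = j ∧ ¬(i = p ∨ i = q ∨ i = r ∨ i = s) then 1 else 0

/-- `J` with ones on the antidiagonal, via `Fin.rev`. -/
def Jrev (m : ℕ) (R : Type*) [CommRing R] : Matrix (Fin m) (Fin m) R :=
  Matrix.of fun i j => if j = i.rev then 1 else 0

lemma stdBasisMatrix_transpose (i j : Fin m) (c : R) :
    (Matrix.single i j c)ᵀ = Matrix.single j i c := by
  ext a b
  simp [Matrix.single, transpose_apply, and_comm]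

lemma stdBasisMatrix_neg (i j : Fin m) (c : R) :
    Matrix.single i j (-c) = -Matrix.single i j c := by
  ext a b
  simp only [Matrix.single, of_apply, Matrix.neg_apply]
  split_ifs <;> simp

lemma E_mul_J (a b : Fin m) (c : R) :
    Matrix.single a b c * Jrev m R = Matrix.single a b.rev c := by
  ext i j
  rw [mul_apply, Finset.sum_eq_single b]
  · simp only [Matrix.single, Jrev, of_apply]
    by_cases h1 : a = i <;> by_cases h2 : b.rev = j <;>
      simp [h1, h2, Fin.rev_eq_iff] <;> simp [eq_comm] at h2 ⊢ <;> tauto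
  · intro k _ hk
    simp [Matrix.single, hk.symm]
  · simp

lemma J_mul_E (a b : Fin m) (c : R) :
    Jrev m R * Matrix.single a b c = Matrix.single a.rev b c := by
  ext i j
  rw [mul_apply, Finset.sum_eq_single a]
  · simp only [Matrix.single, Jrev, of_apply]
    by_cases h1 : a = i.rev <;> by_cases h2 : b = j <;>
      [skip; skip; skip; skip] <;>
      · have : (a.rev = i) ↔ (a = i.rev) := by
          constructor <;> (rintro rfl; simp [Fin.rev_rev])
        simp [h1, h2, this]
  · intro k _ hk
    simp [Matrix.single, Ne.symm hk]
  · simp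


section Main

variable (p q r s : Fin m)
variable (hpq : p ≠ q) (hpr : p ≠ r) (hps : p ≠ s) (hqr : q ≠ r) (hqs : q ≠ s) (hrs : r ≠ s)
variable (hs : p.rev = s) (hr : q.rev = r)

/-- The permutation `(p q)(r s)`. -/
def tau (p q r s : Fin m) : Equiv.Perm (Fin m) := (Equiv.swap p q).trans (Equiv.swap r s)

include hqr hqs in
lemma tau_p : tau p q r s p = q := by
  simp [tau, Equiv.swap_apply_left, Equiv.swap_apply_of_ne_of_ne hqr hqs]

include hpr hps in
lemma tau_q : tau p q r s q = p := by
  simp [tau, Equiv.swap_apply_right, Equiv.swap_apply_of_ne_of_ne hpr hps]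

include hpr hqr in
lemma tau_r : tau p q r s r = s := by
  simp [tau, Equiv.swap_apply_of_ne_of_ne (Ne.symm hpr) (Ne.symm hqr), Equiv.swap_apply_left]

include hps hqs in
lemma tau_s : tau p q r s s = r := by
  simp [tau, Equiv.swap_apply_of_ne_of_ne (Ne.symm hps) (Ne.symm hqs), Equiv.swap_apply_right]

lemma tau_other {x : Fin m} (h1 : x ≠ p) (h2 : x ≠ q) (h3 : x ≠ r) (h4 : x ≠ s) :
    tau p q r s x = x := by
  simp [tau, Equiv.swap_apply_of_ne_of_ne h1 h2, Equiv.swap_apply_of_ne_of_ne h3 h4]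

include hpq hpr hps hqr hqs hrs in
lemma tau_invol (x : Fin m) : tau p q r s (tau p q r s x) = x := by
  by_cases h1 : x = p
  · rw [h1, tau_p p q r s hqr hqs, tau_q p q r s hpr hps]
  by_cases h2 : x = q
  · rw [h2, tau_q p q r s hpr hps, tau_p p q r s hqr hqs]
  by_cases h3 : x = r
  · rw [h3, tau_r p q r s hpr hqr, tau_s p q r s hps hqs]
  by_cases h4 : x = s
  · rw [h4, tau_s p q r s hps hqs, tau_r p q r s hpr hqr]
  rw [tau_other p q r s h1 h2 h3 h4, tau_other p q r s h1 h2 h3 h4]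

include hpq hpr hps hqr hqs hrs in
lemma tau_symm : (tau p q r s).symm = tau p q r s := by
  refine Equiv.ext fun x => (tau p q r s).injective ?_
  rw [Equiv.apply_symm_apply, tau_invol p q r s hpq hpr hps hqr hqs hrs]

include hpq hpr hps hqr hqs hrs hs hr in
lemma tau_rev (x : Fin m) : tau p q r s x.rev = (tau p q r s x).rev := by
  have hs' : s.rev = p := by rw [← hs, Fin.rev_rev]
  have hr' : r.rev = q := by rw [← hr, Fin.rev_rev]
  by_cases h1 : x = p
  · rw [h1, hs, tau_s p q r s hps hqs, tau_p p q r s hqr hqs, hr]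
  by_cases h2 : x = q
  · rw [h2, hr, tau_r p q r s hpr hqr, tau_q p q r s hpr hps, hs]
  by_cases h3 : x = r
  · rw [h3, hr', tau_q p q r s hpr hps, tau_r p q r s hpr hqr, hs']
  by_cases h4 : x = s
  · rw [h4, hs', tau_p p q r s hqr hqs, tau_s p q r s hps hqs, hr']
  have k1 : x.rev ≠ p := fun h => h4 (by rw [← Fin.rev_rev x, h, hs])
  have k2 : x.rev ≠ q := fun h => h3 (by rw [← Fin.rev_rev x, h, hr])
  have k3 : x.rev ≠ r := fun h => h2 (by rw [← Fin.rev_rev x, h, hr'])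
  have k4 : x.rev ≠ s := fun h => h1 (by rw [← Fin.rev_rev x, h, hs'])
  rw [tau_other p q r s k1 k2 k3 k4, tau_other p q r s h1 h2 h3 h4]

/-- The unipotent factor. -/
def Tmat (p q r s : Fin m) (z : R) : Matrix (Fin m) (Fin m) R :=
  1 + Matrix.single p q (-z) + Matrix.single r s z

set_option maxHeartbeats 1000000 in
include hpq hpr hps hqr hqs hrs in
lemma gAux_eq (z : R) :
    gAux p q r s z = Tmat p q r s z * (tau p q r s).toPEquiv.toMatrix := by
  rw [PEquiv.mul_toMatrix_toPEquiv, tau_symm p q r s hpq hpr hps hqr hqs hrs]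
  have h1 := Ne.symm hpq; have h2 := Ne.symm hpr; have h3 := Ne.symm hps
  have h4 := Ne.symm hqr; have h5 := Ne.symm hqs; have h6 := Ne.symm hrs
  ext i j
  rw [submatrix_apply, id_eq]
  by_cases hjp : j = p
  · rw [hjp, tau_p p q r s hqr hqs]
    simp only [gAux, Tmat, of_apply, Matrix.add_apply, one_apply, Matrix.single]
    by_cases hip : i = p <;> by_cases hiq : i = q <;> by_cases hir : i = r <;>
      by_cases his : i = s <;> simp_all [eq_comm]
  by_cases hjq : j = q
  · rw [hjq, tau_q p q r s hpr hps]
    simp only [gAux, Tmat, of_apply, Matrix.add_apply, one_apply, Matrix.single]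
    by_cases hip : i = p <;> by_cases hiq : i = q <;> by_cases hir : i = r <;>
      by_cases his : i = s <;> simp_all [eq_comm]
  by_cases hjr : j = r
  · rw [hjr, tau_r p q r s hpr hqr]
    simp only [gAux, Tmat, of_apply, Matrix.add_apply, one_apply, Matrix.single]
    by_cases hip : i = p <;> by_cases hiq : i = q <;> by_cases hir : i = r <;>
      by_cases his : i = s <;> simp_all [eq_comm]
  by_cases hjs : j = s
  · rw [hjs, tau_s p q r s hps hqs]
    simp only [gAux, Tmat, of_apply, Matrix.add_apply, one_apply, Matrix.single]
    by_cases hip : i = p <;> by_cases hiq : i = q <;> by_cases hir : i = r <;>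
      by_cases his : i = s <;> simp_all [eq_comm]
  · rw [tau_other p q r s hjp hjq hjr hjs]
    simp only [gAux, Tmat, of_apply, Matrix.add_apply, one_apply, Matrix.single]
    by_cases hip : i = p <;> by_cases hiq : i = q <;> by_cases hir : i = r <;>
      by_cases his : i = s <;> simp_all [eq_comm]

include hpq hpr hps hqr hqs hrs hs hr in
theorem gAux_props (z : R) :
    (gAux p q r s z)ᵀ * Jrev m R * gAux p q r s z = Jrev m R ∧
      (gAux p q r s z).det = 1 := by
  have hs' : s.rev = p := by rw [← hs, Fin.rev_rev]
  have hr' : r.rev = q := by rw [← hr, Fin.rev_rev]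
  set t := tau p q r s with ht
  set T := Tmat p q r s z with hTdef
  set P : Matrix (Fin m) (Fin m) R := t.toPEquiv.toMatrix with hP
  have hTt : Tᵀ = 1 + Matrix.single q p (-z) + Matrix.single s r z := by
    simp only [hTdef, Tmat, transpose_add, transpose_one, stdBasisMatrix_transpose]
  have hmid : Tᵀ * Jrev m R * T = Jrev m R := by
    have step1 : Tᵀ * Jrev m R =
        Jrev m R + Matrix.single q s (-z) + Matrix.single s q z := by
      rw [hTt, add_mul, add_mul, one_mul, E_mul_J, E_mul_J, hs, hr']
    rw [step1, hTdef, Tmat]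
    simp only [mul_add, add_mul, mul_one, J_mul_E, hs, hr',
      Matrix.single_mul_single_of_ne _ _ _ _ (Ne.symm hps),
      Matrix.single_mul_single_of_ne _ _ _ _ (Ne.symm hpq),
      Matrix.single_mul_single_of_ne _ _ _ _ (Ne.symm hrs),
      Matrix.single_mul_single_of_ne _ _ _ _ hqr,
      add_zero, zero_add]
    simp only [stdBasisMatrix_neg]
    abel
  have hPJP : Pᵀ * Jrev m R * P = Jrev m R := by
    rw [hP, ← PEquiv.toMatrix_symm, ← Equiv.toPEquiv_symm,
      tau_symm p q r s hpq hpr hps hqr hqs hrs, ← ht, PEquiv.toMatrix_toPEquiv_mul,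
      PEquiv.mul_toMatrix_toPEquiv, tau_symm p q r s hpq hpr hps hqr hqs hrs, ← ht,
      submatrix_submatrix]
    ext i j
    rw [submatrix_apply]
    simp only [Jrev, of_apply, Function.comp_apply, id_eq]
    have hiff : t j = (t i).rev ↔ j = i.rev := by
      rw [← tau_rev p q r s hpq hpr hps hqr hqs hrs hs hr, ← ht, t.apply_eq_iff_eq]
    by_cases hc : j = i.rev
    · rw [if_pos (hiff.mpr hc), if_pos hc]
    · rw [if_neg (fun h => hc (hiff.mp h)), if_neg hc]
  have hg := gAux_eq p q r s hpq hpr hps hqr hqs hrs (z := z)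
  rw [← ht, ← hTdef, ← hP] at hg
  constructor
  · rw [hg, transpose_mul]
    calc Pᵀ * Tᵀ * Jrev m R * (T * P) = Pᵀ * (Tᵀ * Jrev m R * T) * P := by
          simp only [Matrix.mul_assoc]
      _ = Pᵀ * Jrev m R * P := by rw [hmid]
      _ = Jrev m R := hPJP
  · have hT2 : Matrix.transvection p q (-z) * Matrix.transvection r s z = T := by
      rw [hTdef, Tmat]
      simp only [Matrix.transvection]
      simp only [mul_add, add_mul, one_mul, mul_one,
        Matrix.single_mul_single_of_ne _ _ _ _ hqr, add_zero]
    rw [hg, Matrix.det_mul, ← hT2, Matrix.det_mul,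
      Matrix.det_transvection_of_ne _ _ hpq _, Matrix.det_transvection_of_ne _ _ hrs _]
    have hdP : P.det = (Equiv.Perm.sign t : ℤ) := Matrix.det_permutation t
    have hsign : Equiv.Perm.sign t = 1 := by
      rw [ht, tau, ← Equiv.Perm.mul_def, _root_.map_mul,
        Equiv.Perm.sign_swap hpq, Equiv.Perm.sign_swap hrs]
      simp
    rw [hdP, hsign]
    simp

end Main

lemma antidiagJ_eq (n : ℕ) (R : Type*) [CommRing R] :
    antidiagJ n R = Jrev (2 * n + 2) R := by
  ext i j
  have hi := i.isLt
  have hj := j.isLt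
  simp only [antidiagJ, Jrev, of_apply]
  refine if_congr ?_ rfl rfl
  rw [Fin.ext_iff, Fin.val_rev]
  omega

lemma gMat_eq_gAux_pos {R : Type*} [CommRing R] (n α : ℕ) (hn : 2 ≤ n)
    (h1 : 1 ≤ α) (hα : α ≤ n) (z : R) :
    gMat n α z = gAux (⟨α - 1, by omega⟩ : Fin (2 * n + 2)) ⟨α, by omega⟩
      ⟨2 * n + 1 - α, by omega⟩ ⟨2 * n + 2 - α, by omega⟩ z := by
  ext i j
  have hi := i.isLt
  have hj := j.isLt
  simp only [gMat, gAux, of_apply, Fin.ext_iff]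
  rw [if_neg (by omega : ¬ α = 0)]
  exact if_congr (by omega) rfl (if_congr (by omega) rfl
    (if_congr (by omega) rfl (if_congr (by omega) rfl rfl)))

lemma gMat_eq_gAux_zero {R : Type*} [CommRing R] (n : ℕ) (hn : 2 ≤ n) (z : R) :
    gMat n 0 z = gAux (⟨n - 1, by omega⟩ : Fin (2 * n + 2)) ⟨n + 1, by omega⟩
      ⟨n, by omega⟩ ⟨n + 2, by omega⟩ z := by
  ext i j
  have hi := i.isLt
  have hj := j.isLt
  simp only [gMat, gAux, of_apply, Fin.ext_iff]
  rw [if_pos trivial]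
  exact if_congr (by omega) rfl (if_congr (by omega) rfl
    (if_congr (by omega) rfl (if_congr (by omega) rfl rfl)))

end GAux

/-- for every `α ∈ {0,1,…,n}`, every commutative ring `R` and every
`z ∈ R`, the matrix `g_α(z)` satisfies `g_α(z)ᵀ · J · g_α(z) = J` and
`det (g_α(z)) = 1`; in particular `g_α(z) ∈ SO(2n+2)` for the form `J`. -/
theorem gMat_transpose_J_gMat_eq_J_and_det_eq_one
    {R : Type*} [CommRing R] (n : ℕ) (hn : 2 ≤ n) (α : ℕ) (hα : α ≤ n) (z : R) :
    (gMat n α z)ᵀ * antidiagJ n R * gMat n α z = antidiagJ n R ∧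
    (gMat n α z).det = 1 := by
  rw [GAux.antidiagJ_eq]
  by_cases h0 : α = 0
  · subst h0
    rw [GAux.gMat_eq_gAux_zero n hn z]
    refine GAux.gAux_props _ _ _ _ ?_ ?_ ?_ ?_ ?_ ?_ ?_ ?_ z <;>
      first
        | (simp only [ne_eq, Fin.mk.injEq]; omega)
        | (apply Fin.ext; simp only [Fin.val_rev, Fin.val_mk]; omega)
  · rw [GAux.gMat_eq_gAux_pos n α hn (by omega) hα z]
    refine GAux.gAux_props _ _ _ _ ?_ ?_ ?_ ?_ ?_ ?_ ?_ ?_ z <;>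
      first
        | (simp only [ne_eq, Fin.mk.injEq]; omega)
        | (apply Fin.ext; simp only [Fin.val_rev, Fin.val_mk]; omega)
end

section
/- Let M = M_{Q_1} be the product g_0(z_1)·g_{n-1}(z_2)···g_1(z_n)···g_{n-1}(z_{2n-2})·g_0(z_{2n-1}) over the polynomial ring ℤ[z_1,…,z_{2n-1}] associated to the word Q_1 = (0, n-1, n-2, …, 2, 1, 2, 3, …, n-1, 0). Then for every 1 ≤ α ≤ n, the determinant of the northwest α×α submatrix of M (rows and columns {1,…,α}) equals -(z_n + Σ_{k=1}^{α-1} z_{n-k} z_{n+k}). (Computational core of Proposition 2.) -/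
open Matrix MvPolynomial

section Helpers
variable {R : Type*} [CommRing R] {N : ℕ}

lemma sum_one_aux (v : Fin N → R) (c1 : ℕ) (h1 : c1 < N) (a : R) :
    ∑ k : Fin N, v k * (if (k : ℕ) = c1 then a else 0) = v ⟨c1, h1⟩ * a := by
  have h : ∀ k : Fin N, v k * (if (k : ℕ) = c1 then a else 0)
      = if k = (⟨c1, h1⟩ : Fin N) then v ⟨c1, h1⟩ * a else 0 := by
    intro k
    by_cases hk : (k : ℕ) = c1
    · have : k = (⟨c1, h1⟩ : Fin N) := Fin.ext hk
      subst this; simp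
    · have : k ≠ (⟨c1, h1⟩ : Fin N) := by simp [Fin.ext_iff, hk]
      simp [hk, this]
  simp [h]

lemma sum_two_aux (v : Fin N → R) (c1 c2 : ℕ) (h1 : c1 < N) (h2 : c2 < N)
    (hne : c1 ≠ c2) (a b : R) :
    ∑ k : Fin N, v k * (if (k : ℕ) = c1 then a else if (k : ℕ) = c2 then b else 0)
      = v ⟨c1, h1⟩ * a + v ⟨c2, h2⟩ * b := by
  have h : ∀ k : Fin N, v k * (if (k : ℕ) = c1 then a else if (k : ℕ) = c2 then b else 0)
      = (if k = (⟨c1, h1⟩ : Fin N) then v ⟨c1, h1⟩ * a else 0)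
        + (if k = (⟨c2, h2⟩ : Fin N) then v ⟨c2, h2⟩ * b else 0) := by
    intro k
    by_cases hk1 : (k : ℕ) = c1
    · have e : k = (⟨c1, h1⟩ : Fin N) := Fin.ext hk1
      subst e
      simp [hk1, Fin.ext_iff, hne]
    · by_cases hk2 : (k : ℕ) = c2
      · have e : k = (⟨c2, h2⟩ : Fin N) := Fin.ext hk2
        subst e
        simp [Fin.ext_iff, hk1, fun h => hk1 h]
      · have e1 : k ≠ (⟨c1, h1⟩ : Fin N) := by simp [Fin.ext_iff, hk1]
        have e2 : k ≠ (⟨c2, h2⟩ : Fin N) := by simp [Fin.ext_iff, hk2]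
        simp [hk1, hk2, e1, e2]
  simp [h, Finset.sum_add_distrib]

end Helpers

section GCol
variable {R : Type*} [CommRing R]

lemma vecMul_apply' {N : ℕ} (v : Fin N → R) (M : Matrix (Fin N) (Fin N) R) (j : Fin N) :
    (v ᵥ* M) j = ∑ k, v k * M k j := rfl

lemma vecMul_gMat_pos {n α : ℕ} (h1 : 1 ≤ α) (hn : α ≤ n) (z : R)
    (v : Fin (2 * n + 2) → R) :
    v ᵥ* gMat n α z = fun j : Fin (2 * n + 2) =>
      if (j : ℕ) + 1 = α then -z * v j + v ⟨α, by omega⟩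
      else if (j : ℕ) + 1 = α + 1 then v ⟨α - 1, by omega⟩
      else if (j : ℕ) + 1 = 2 * n + 2 - α then z * v j + v ⟨2 * n + 2 - α, by omega⟩
      else if (j : ℕ) + 1 = 2 * n + 3 - α then v ⟨2 * n + 1 - α, by omega⟩
      else v j := by
  funext j
  rw [vecMul_apply']
  by_cases hj1 : (j : ℕ) + 1 = α
  · have hcol : ∀ k : Fin (2 * n + 2), gMat n α z k j =
        (if (k : ℕ) = α - 1 then -z else if (k : ℕ) = α then (1 : R) else 0) := by
      intro k
      simp only [gMat, Matrix.of_apply]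
      rw [if_neg (by omega : ¬ α = 0)]
      split_ifs <;> first | rfl | omega | (exfalso; omega)
    simp only [hcol]
    rw [sum_two_aux v (α - 1) α (by omega) (by omega) (by omega)]
    have hje : (⟨α - 1, by omega⟩ : Fin (2 * n + 2)) = j := by
      apply Fin.ext; simp only [Fin.val_mk]; omega
    rw [if_pos hj1, hje]
    ring
  · by_cases hj2 : (j : ℕ) + 1 = α + 1
    · have hcol : ∀ k : Fin (2 * n + 2), gMat n α z k j =
          (if (k : ℕ) = α - 1 then (1 : R) else 0) := by
        intro k
        simp only [gMat, Matrix.of_apply]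
        rw [if_neg (by omega : ¬ α = 0)]
        split_ifs <;> first | rfl | omega | (exfalso; omega)
      simp only [hcol]
      rw [sum_one_aux v (α - 1) (by omega)]
      rw [if_neg hj1, if_pos hj2, mul_one]
    · by_cases hj3 : (j : ℕ) + 1 = 2 * n + 2 - α
      · have hcol : ∀ k : Fin (2 * n + 2), gMat n α z k j =
            (if (k : ℕ) = 2 * n + 1 - α then z
             else if (k : ℕ) = 2 * n + 2 - α then (1 : R) else 0) := by
          intro k
          simp only [gMat, Matrix.of_apply]
          rw [if_neg (by omega : ¬ α = 0)]
          split_ifs <;> first | rfl | omega | (exfalso; omega)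
        simp only [hcol]
        rw [sum_two_aux v (2 * n + 1 - α) (2 * n + 2 - α) (by omega) (by omega) (by omega)]
        have hje : (⟨2 * n + 1 - α, by omega⟩ : Fin (2 * n + 2)) = j := by
          apply Fin.ext; simp only [Fin.val_mk]; omega
        rw [if_neg hj1, if_neg hj2, if_pos hj3, hje]
        ring
      · by_cases hj4 : (j : ℕ) + 1 = 2 * n + 3 - α
        · have hcol : ∀ k : Fin (2 * n + 2), gMat n α z k j =
              (if (k : ℕ) = 2 * n + 1 - α then (1 : R) else 0) := by
            intro k
            simp only [gMat, Matrix.of_apply]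
            rw [if_neg (by omega : ¬ α = 0)]
            split_ifs <;> first | rfl | omega | (exfalso; omega)
          simp only [hcol]
          rw [sum_one_aux v (2 * n + 1 - α) (by omega)]
          rw [if_neg hj1, if_neg hj2, if_neg hj3, if_pos hj4, mul_one]
        · have hcol : ∀ k : Fin (2 * n + 2), gMat n α z k j =
              (if (k : ℕ) = (j : ℕ) then (1 : R) else 0) := by
            intro k
            simp only [gMat, Matrix.of_apply]
            rw [if_neg (by omega : ¬ α = 0)]
            split_ifs <;> first | rfl | omega | (exfalso; omega)
          simp only [hcol]
          rw [sum_one_aux v (j : ℕ) (by omega)]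
          rw [if_neg hj1, if_neg hj2, if_neg hj3, if_neg hj4, Fin.eta, mul_one]

lemma vecMul_gMat_zero {n : ℕ} (hn : 1 ≤ n) (z : R) (v : Fin (2 * n + 2) → R) :
    v ᵥ* gMat n 0 z = fun j : Fin (2 * n + 2) =>
      if (j : ℕ) + 1 = n then -z * v j + v ⟨n + 1, by omega⟩
      else if (j : ℕ) + 1 = n + 1 then z * v j + v ⟨n + 2, by omega⟩
      else if (j : ℕ) + 1 = n + 2 then v ⟨n - 1, by omega⟩
      else if (j : ℕ) + 1 = n + 3 then v ⟨n, by omega⟩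
      else v j := by
  funext j
  rw [vecMul_apply']
  by_cases hj1 : (j : ℕ) + 1 = n
  · have hcol : ∀ k : Fin (2 * n + 2), gMat n 0 z k j =
        (if (k : ℕ) = n - 1 then -z else if (k : ℕ) = n + 1 then (1 : R) else 0) := by
      intro k
      simp only [gMat, Matrix.of_apply]
      rw [if_pos trivial]
      split_ifs <;> first | rfl | omega | (exfalso; omega)
    simp only [hcol]
    rw [sum_two_aux v (n - 1) (n + 1) (by omega) (by omega) (by omega)]
    have hje : (⟨n - 1, by omega⟩ : Fin (2 * n + 2)) = j := by
      apply Fin.ext; simp only [Fin.val_mk]; omega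
    rw [if_pos hj1, hje]
    ring
  · by_cases hj2 : (j : ℕ) + 1 = n + 1
    · have hcol : ∀ k : Fin (2 * n + 2), gMat n 0 z k j =
          (if (k : ℕ) = n then z else if (k : ℕ) = n + 2 then (1 : R) else 0) := by
        intro k
        simp only [gMat, Matrix.of_apply]
        rw [if_pos trivial]
        split_ifs <;> first | rfl | omega | (exfalso; omega)
      simp only [hcol]
      rw [sum_two_aux v n (n + 2) (by omega) (by omega) (by omega)]
      have hje : (⟨n, by omega⟩ : Fin (2 * n + 2)) = j := by
        apply Fin.ext; simp only [Fin.val_mk]; omega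
      rw [if_neg hj1, if_pos hj2, hje]
      ring
    · by_cases hj3 : (j : ℕ) + 1 = n + 2
      · have hcol : ∀ k : Fin (2 * n + 2), gMat n 0 z k j =
            (if (k : ℕ) = n - 1 then (1 : R) else 0) := by
          intro k
          simp only [gMat, Matrix.of_apply]
          rw [if_pos trivial]
          split_ifs <;> first | rfl | omega | (exfalso; omega)
        simp only [hcol]
        rw [sum_one_aux v (n - 1) (by omega)]
        rw [if_neg hj1, if_neg hj2, if_pos hj3, mul_one]
      · by_cases hj4 : (j : ℕ) + 1 = n + 3
        · have hcol : ∀ k : Fin (2 * n + 2), gMat n 0 z k j =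
              (if (k : ℕ) = n then (1 : R) else 0) := by
            intro k
            simp only [gMat, Matrix.of_apply]
            rw [if_pos trivial]
            split_ifs <;> first | rfl | omega | (exfalso; omega)
          simp only [hcol]
          rw [sum_one_aux v n (by omega)]
          rw [if_neg hj1, if_neg hj2, if_neg hj3, if_pos hj4, mul_one]
        · have hcol : ∀ k : Fin (2 * n + 2), gMat n 0 z k j =
              (if (k : ℕ) = (j : ℕ) then (1 : R) else 0) := by
            intro k
            simp only [gMat, Matrix.of_apply]
            rw [if_pos trivial]
            split_ifs <;> first | rfl | omega | (exfalso; omega)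
          simp only [hcol]
          rw [sum_one_aux v (j : ℕ) (by omega)]
          rw [if_neg hj1, if_neg hj2, if_neg hj3, if_neg hj4, Fin.eta, mul_one]

end GCol

section Words

/-- product of `gMat`s along a word, with variable indices starting at `k`. -/
noncomputable def wprod (n : ℕ) (k : ℕ) : List ℕ → Matrix (Fin (2 * n + 2)) (Fin (2 * n + 2)) (MvPolynomial ℕ ℤ)
  | [] => 1
  | a :: Q => gMat n a (X k) * wprod n (k + 1) Q

lemma wprod_nil (n k : ℕ) : wprod n k [] = 1 := rfl

lemma wprod_cons (n k a : ℕ) (Q : List ℕ) :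
    wprod n k (a :: Q) = gMat n a (X k) * wprod n (k + 1) Q := rfl

lemma wprod_append (n : ℕ) (Q1 : List ℕ) : ∀ (k : ℕ) (Q2 : List ℕ),
    wprod n k (Q1 ++ Q2) = wprod n k Q1 * wprod n (k + Q1.length) Q2 := by
  induction Q1 with
  | nil => intro k Q2; simp [wprod_nil]
  | cons a Q ih =>
      intro k Q2
      simp only [List.cons_append, wprod_cons, ih (k + 1) Q2, List.length_cons, mul_assoc]
      rw [show k + 1 + Q.length = k + (Q.length + 1) by omega]

lemma MQ_eq_wprod (n : ℕ) (Q : List ℕ) : MQ n Q = wprod n 1 Q := by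
  suffices h : ∀ (Q : List ℕ) (k : ℕ),
      (List.ofFn (fun l : Fin Q.length => gMat n (Q.get l) (X ((l : ℕ) + k)))).prod
        = wprod n k Q by
    exact h Q 1
  intro Q
  induction Q with
  | nil => intro k; simp [wprod_nil]
  | cons a Q ih =>
      intro k
      rw [List.ofFn_succ]
      simp only [List.prod_cons, List.get, Fin.val_succ, Fin.val_zero, Nat.zero_add,
        wprod_cons, Fin.eta]
      congr 1
      rw [← ih (k + 1)]
      apply congrArg List.prod
      apply congrArg List.ofFn
      funext l
      have h2 : (l : ℕ) + 1 + k = (l : ℕ) + (k + 1) := by omega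
      rw [h2]
      rfl

lemma descWord_nil (a : ℕ) : descWord a (a + 1) = [] := by
  simp [descWord]

lemma descWord_cons (a b : ℕ) (hb : 1 ≤ b) (h : b ≤ a) : descWord a b = a :: descWord (a - 1) b := by
  unfold descWord
  rw [show a + 1 - b = (a - b) + 1 by omega, List.range_succ, List.reverse_append]
  simp only [List.reverse_singleton, List.singleton_append, List.map_cons]
  congr 1
  · show a - b + b = a
    omega
  · rw [show a - 1 + 1 - b = a - b by omega]

lemma ascWord_nil (a : ℕ) : ascWord (a + 1) a = [] := by
  simp [ascWord]

lemma ascWord_cons (a b : ℕ) (h : a ≤ b) : ascWord a b = a :: ascWord (a + 1) b := by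
  unfold ascWord
  rw [show b + 1 - a = (b - a) + 1 by omega, List.range_succ_eq_map]
  simp only [List.map_cons, List.map_map]
  congr 1
  · show 0 + a = a
    omega
  · rw [show b + 1 - (a + 1) = b - a by omega]
    refine List.map_congr_left fun x _ => ?_
    show x.succ + a = x + (a + 1)
    omega

lemma descWord_length (a b : ℕ) : (descWord a b).length = a + 1 - b := by
  simp [descWord]

lemma ascWord_length (a b : ℕ) : (ascWord a b).length = b + 1 - a := by
  simp [ascWord]

lemma descWord_mem (a b x : ℕ) (hx : x ∈ descWord a b) : b ≤ x ∧ x ≤ a := by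
  simp only [descWord, List.mem_map, List.mem_reverse, List.mem_range] at hx
  obtain ⟨y, hy, rfl⟩ := hx
  omega

lemma ascWord_mem (a b x : ℕ) (hx : x ∈ ascWord a b) : a ≤ x ∧ x ≤ b := by
  simp only [ascWord, List.mem_map, List.mem_range] at hx
  obtain ⟨y, hy, rfl⟩ := hx
  omega

lemma descWord_split (a b c : ℕ) (h1 : b ≤ c + 1) (h2 : c ≤ a) :
    descWord a b = descWord a (c + 1) ++ descWord c b := by
  unfold descWord
  rw [show a + 1 - b = (c + 1 - b) + (a - c) by omega, List.range_add,
    List.reverse_append, List.map_append]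
  congr 1
  · rw [show a + 1 - (c + 1) = a - c by omega, List.map_reverse, List.map_reverse,
      List.map_map]
    apply congrArg List.reverse
    refine List.map_congr_left fun x _ => ?_
    show (c + 1 - b + x) + b = x + (c + 1)
    omega

lemma ascWord_split (a b c : ℕ) (h1 : a ≤ c + 1) (h2 : c ≤ b) :
    ascWord a b = ascWord a c ++ ascWord (c + 1) b := by
  unfold ascWord
  rw [show b + 1 - a = (c + 1 - a) + (b - c) by omega, List.range_add, List.map_append]
  congr 1
  rw [show b + 1 - (c + 1) = b - c by omega, List.map_map]
  refine List.map_congr_left fun x _ => ?_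
  show (c + 1 - a + x) + a = x + (c + 1)
  omega

end Words

section Vec
local notation "Rp" => MvPolynomial ℕ ℤ

lemma single_vecMul' {N : ℕ} (i : Fin N) (M : Matrix (Fin N) (Fin N) Rp) :
    Pi.single i (1 : Rp) ᵥ* M = M i := by
  funext j
  rw [vecMul_apply']
  simp [Pi.single_apply, ite_mul]

lemma single_eq_ite {N : ℕ} (i : Fin N) :
    (Pi.single i 1 : Fin N → Rp) = fun j : Fin N => if (j : ℕ) = (i : ℕ) then 1 else 0 := by
  funext j
  simp [Pi.single_apply, Fin.ext_iff]

lemma noop_word (n : ℕ) (Q : List ℕ) (v : Fin (2 * n + 2) → Rp)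
    (hQ : ∀ a ∈ Q, 1 ≤ a ∧ a ≤ n)
    (hv : ∀ a ∈ Q, ∀ j : Fin (2 * n + 2),
      ((j : ℕ) + 1 = a ∨ (j : ℕ) + 1 = a + 1 ∨ (j : ℕ) + 1 = 2 * n + 2 - a ∨
        (j : ℕ) + 1 = 2 * n + 3 - a) → v j = 0) :
    ∀ k, v ᵥ* wprod n k Q = v := by
  induction Q with
  | nil => intro k; rw [wprod_nil, Matrix.vecMul_one]
  | cons a Q ih =>
      intro k
      have ha := hQ a List.mem_cons_self
      rw [wprod_cons, ← Matrix.vecMul_vecMul]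
      have hfix : v ᵥ* gMat n a (X k) = v := by
        rw [vecMul_gMat_pos ha.1 ha.2]
        funext j
        have hmem := hv a List.mem_cons_self
        split_ifs with h1 h2 h3 h4
        · rw [hmem j (Or.inl h1),
            hmem ⟨a, by omega⟩ (Or.inr (Or.inl (show a + 1 = a + 1 from rfl)))]
          ring
        · exact (hmem ⟨a - 1, by omega⟩
              (Or.inl (show a - 1 + 1 = a by omega))).trans
            (hmem j (Or.inr (Or.inl h2))).symm
        · rw [hmem j (Or.inr (Or.inr (Or.inl h3))),
            hmem ⟨2 * n + 2 - a, by omega⟩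
              (Or.inr (Or.inr (Or.inr (show 2 * n + 2 - a + 1 = 2 * n + 3 - a by omega))))]
          ring
        · exact (hmem ⟨2 * n + 1 - a, by omega⟩
              (Or.inr (Or.inr (Or.inl (show 2 * n + 1 - a + 1 = 2 * n + 2 - a by omega))))).trans
            (hmem j (Or.inr (Or.inr (Or.inr h4)))).symm
        · rfl
      rw [hfix]
      exact ih (fun b hb => hQ b (List.mem_cons_of_mem a hb))
        (fun b hb => hv b (List.mem_cons_of_mem a hb)) (k + 1)

lemma desc_move (n : ℕ) (hn : 2 ≤ n) :
    ∀ (a k q : ℕ) (c d : Rp), a ≤ n - 1 → a + 2 ≤ q → q ≤ n + 2 →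
    ((fun j : Fin (2 * n + 2) =>
        if (j : ℕ) + 1 = a + 1 then c else if (j : ℕ) + 1 = q then d else 0)
      ᵥ* wprod n k (descWord a 1))
    = fun j : Fin (2 * n + 2) =>
        if (j : ℕ) + 1 = 1 then c else if (j : ℕ) + 1 = q then d else 0 := by
  intro a
  induction a with
  | zero =>
      intro k q c d _ _ _
      rw [show descWord 0 1 = [] from by simp [descWord], wprod_nil, Matrix.vecMul_one]
  | succ a ih =>
      intro k q c d ha hq1 hq2
      rw [descWord_cons (a + 1) 1 le_rfl (by omega), wprod_cons, ← Matrix.vecMul_vecMul,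
        show a + 1 - 1 = a from by omega]
      have hstep : ((fun j : Fin (2 * n + 2) =>
          if (j : ℕ) + 1 = a + 2 then c else if (j : ℕ) + 1 = q then d else 0)
          ᵥ* gMat n (a + 1) (X k))
          = fun j : Fin (2 * n + 2) =>
            if (j : ℕ) + 1 = a + 1 then c else if (j : ℕ) + 1 = q then d else 0 := by
        rw [vecMul_gMat_pos (by omega) (by omega)]
        funext j
        dsimp only
        simp only [Fin.val_mk]
        split_ifs <;> first | rfl | omega | (exfalso; omega) | ring
      rw [hstep, ih (k + 1) q c d (by omega) (by omega) hq2]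

lemma asc_row1 (n : ℕ) (hn : 2 ≤ n) :
    ∀ (t s : ℕ), s + t = n - 1 → 1 ≤ s →
    ((fun j : Fin (2 * n + 2) =>
        if (j : ℕ) + 1 ≤ s then (-X (n + (j : ℕ)) : Rp) else if (j : ℕ) + 1 = s + 1 then 1 else 0)
      ᵥ* wprod n (n + s) (ascWord (s + 1) (n - 1)))
    = fun j : Fin (2 * n + 2) =>
        if (j : ℕ) + 1 ≤ n - 1 then (-X (n + (j : ℕ)) : Rp)
        else if (j : ℕ) + 1 = n then 1 else 0 := by
  intro t
  induction t with
  | zero =>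
      intro s hs hs1
      obtain rfl : s = n - 1 := by omega
      rw [show ascWord (n - 1 + 1) (n - 1) = [] from ascWord_nil (n - 1), wprod_nil,
        Matrix.vecMul_one]
      funext j
      rw [show n - 1 + 1 = n from by omega]
  | succ t ih =>
      intro s hs hs1
      rw [ascWord_cons (s + 1) (n - 1) (by omega), wprod_cons, ← Matrix.vecMul_vecMul]
      have hstep : ((fun j : Fin (2 * n + 2) =>
          if (j : ℕ) + 1 ≤ s then (-X (n + (j : ℕ)) : Rp) else if (j : ℕ) + 1 = s + 1 then 1 else 0)
          ᵥ* gMat n (s + 1) (X (n + s)))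
          = fun j : Fin (2 * n + 2) =>
            if (j : ℕ) + 1 ≤ s + 1 then (-X (n + (j : ℕ)) : Rp)
            else if (j : ℕ) + 1 = s + 2 then 1 else 0 := by
        rw [vecMul_gMat_pos (by omega) (by omega)]
        funext j
        dsimp only
        split_ifs <;>
          first
            | rfl | omega | (exfalso; omega)
            | (rw [show n + (j : ℕ) = n + s from by omega]; ring) | ring
      rw [hstep]
      have h2 := ih (s + 1) (by omega) (by omega)
      rw [show n + (s + 1) = n + s + 1 from by omega] at h2
      exact h2

end Vec

section Rows
local notation "Rp" => MvPolynomial ℕ ℤ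

lemma wordQ1_eq (n : ℕ) (hn : 2 ≤ n) :
    wprod n 1 (wordQ1 n) =
      gMat n 0 (X 1) * (wprod n 2 (descWord (n - 1) 1) *
        (wprod n (n + 1) (ascWord 2 (n - 1)) * gMat n 0 (X (2 * n - 1)))) := by
  unfold wordQ1
  rw [wprod_cons]
  congr 1
  rw [wprod_append, wprod_append]
  simp only [List.length_append, descWord_length, ascWord_length]
  rw [show 2 + (n - 1 + 1 - 1) = n + 1 from by omega,
    show 2 + (n - 1 + 1 - 1 + (n - 1 + 1 - 2)) = 2 * n - 1 from by omega,
    wprod_cons, wprod_nil, mul_one, mul_assoc]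

lemma row_zero (n : ℕ) (hn : 2 ≤ n) (i : Fin (2 * n + 2)) (hi : (i : ℕ) = 0) :
    (wprod n 1 (wordQ1 n)) i = fun j : Fin (2 * n + 2) =>
      if (j : ℕ) < n then -X (n + (j : ℕ)) else if (j : ℕ) = n + 1 then 1 else 0 := by
  rw [← single_vecMul' i (wprod n 1 (wordQ1 n)), wordQ1_eq n hn, ← Matrix.vecMul_vecMul, ← Matrix.vecMul_vecMul,
    ← Matrix.vecMul_vecMul, single_eq_ite]
  have h1 : ((fun j : Fin (2 * n + 2) => if (j : ℕ) = (i : ℕ) then (1 : Rp) else 0)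
      ᵥ* gMat n 0 (X 1)) = fun j : Fin (2 * n + 2) => if (j : ℕ) = 0 then 1 else 0 := by
    rw [vecMul_gMat_zero (by omega)]
    funext j
    dsimp only
    try simp only [Fin.val_mk]
    split_ifs <;> first | rfl | omega | (exfalso; omega) | exact (‹False›).elim | ring
  rw [h1, descWord_split (n - 1) 1 1 (by omega) (by omega),
    show descWord 1 1 = [1] from rfl, wprod_append, descWord_length,
    show 2 + (n - 1 + 1 - (1 + 1)) = n from by omega, ← Matrix.vecMul_vecMul,
    noop_word n (descWord (n - 1) (1 + 1)) _
      (fun a ha => by have := descWord_mem _ _ _ ha; omega)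
      (fun a ha j hj => by
        have := descWord_mem _ _ _ ha
        rw [if_neg (by omega)]) 2,
    wprod_cons, wprod_nil, mul_one]
  have h2 : ((fun j : Fin (2 * n + 2) => if (j : ℕ) = 0 then (1 : Rp) else 0)
      ᵥ* gMat n 1 (X n)) = fun j : Fin (2 * n + 2) =>
      if (j : ℕ) + 1 ≤ 1 then (-X (n + (j : ℕ)) : Rp)
      else if (j : ℕ) + 1 = 1 + 1 then 1 else 0 := by
    rw [vecMul_gMat_pos (by omega) (by omega)]
    funext j
    dsimp only
    try simp only [Fin.val_mk]
    split_ifs <;>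
      first
        | rfl | omega | (exfalso; omega) | exact (‹False›).elim
        | (rw [show n + (j : ℕ) = n from by omega]; ring) | ring
  rw [h2, asc_row1 n hn (n - 2) 1 (by omega) le_rfl]
  rw [vecMul_gMat_zero (by omega)]
  funext j
  dsimp only
  try simp only [Fin.val_mk]
  split_ifs <;>
    first
      | rfl | omega | (exfalso; omega) | exact (‹False›).elim
      | (rw [show n + (j : ℕ) = 2 * n - 1 from by omega]; ring) | ring

lemma row_mid (n : ℕ) (hn : 2 ≤ n) (i : Fin (2 * n + 2)) (hi1 : 1 ≤ (i : ℕ))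
    (hi2 : (i : ℕ) ≤ n - 2) :
    (wprod n 1 (wordQ1 n)) i = fun j : Fin (2 * n + 2) =>
      if (j : ℕ) = 0 then -X (n - (i : ℕ)) else if (j : ℕ) = (i : ℕ) then 1 else 0 := by
  set m := (i : ℕ) with hm
  rw [← single_vecMul' i (wprod n 1 (wordQ1 n)), wordQ1_eq n hn, ← Matrix.vecMul_vecMul, ← Matrix.vecMul_vecMul,
    ← Matrix.vecMul_vecMul, single_eq_ite]
  have h1 : ((fun j : Fin (2 * n + 2) => if (j : ℕ) = m then (1 : Rp) else 0)
      ᵥ* gMat n 0 (X 1)) = fun j : Fin (2 * n + 2) => if (j : ℕ) = m then 1 else 0 := by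
    rw [vecMul_gMat_zero (by omega)]
    funext j
    dsimp only
    try simp only [Fin.val_mk]
    split_ifs <;> first | rfl | omega | (exfalso; omega) | exact (‹False›).elim | ring
  rw [h1, descWord_split (n - 1) 1 (m + 1) (by omega) (by omega),
    wprod_append, descWord_length,
    show 2 + (n - 1 + 1 - (m + 1 + 1)) = n - m from by omega, ← Matrix.vecMul_vecMul,
    noop_word n (descWord (n - 1) (m + 1 + 1)) _
      (fun a ha => by have := descWord_mem _ _ _ ha; omega)
      (fun a ha j hj => by
        have := descWord_mem _ _ _ ha
        rw [if_neg (by omega)]) 2,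
    descWord_cons (m + 1) 1 le_rfl (by omega), wprod_cons, ← Matrix.vecMul_vecMul,
    show m + 1 - 1 = m from by omega]
  have h2 : ((fun j : Fin (2 * n + 2) => if (j : ℕ) = m then (1 : Rp) else 0)
      ᵥ* gMat n (m + 1) (X (n - m))) = fun j : Fin (2 * n + 2) =>
      if (j : ℕ) + 1 = m + 1 then (-X (n - m) : Rp)
      else if (j : ℕ) + 1 = m + 2 then 1 else 0 := by
    rw [vecMul_gMat_pos (by omega) (by omega)]
    funext j
    dsimp only
    try simp only [Fin.val_mk]
    split_ifs <;> first | rfl | omega | (exfalso; omega) | exact (‹False›).elim | ring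
  rw [h2, desc_move n hn m (n - m + 1) (m + 2) (-X (n - m)) 1 (by omega) (by omega)
    (by omega)]
  rw [ascWord_split 2 (n - 1) m (by omega) (by omega), wprod_append, ascWord_length,
    show n + 1 + (m + 1 - 2) = n + m from by omega, ← Matrix.vecMul_vecMul,
    noop_word n (ascWord 2 m) _
      (fun a ha => by have := ascWord_mem _ _ _ ha; omega)
      (fun a ha j hj => by
        have := ascWord_mem _ _ _ ha
        rw [if_neg (by omega), if_neg (by omega)]) (n + 1),
    ascWord_cons (m + 1) (n - 1) (by omega), wprod_cons, ← Matrix.vecMul_vecMul]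
  have h3 : ((fun j : Fin (2 * n + 2) =>
      if (j : ℕ) + 1 = 1 then (-X (n - m) : Rp) else if (j : ℕ) + 1 = m + 2 then 1 else 0)
      ᵥ* gMat n (m + 1) (X (n + m))) = fun j : Fin (2 * n + 2) =>
      if (j : ℕ) + 1 = 1 then (-X (n - m) : Rp)
      else if (j : ℕ) + 1 = m + 1 then 1 else 0 := by
    rw [vecMul_gMat_pos (by omega) (by omega)]
    funext j
    dsimp only
    try simp only [Fin.val_mk]
    split_ifs <;> first | rfl | omega | (exfalso; omega) | exact (‹False›).elim | ring
  rw [h3,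
    noop_word n (ascWord (m + 1 + 1) (n - 1)) _
      (fun a ha => by have := ascWord_mem _ _ _ ha; omega)
      (fun a ha j hj => by
        have := ascWord_mem _ _ _ ha
        rw [if_neg (by omega), if_neg (by omega)]) (n + m + 1)]
  rw [vecMul_gMat_zero (by omega)]
  funext j
  dsimp only
  try simp only [Fin.val_mk]
  split_ifs <;> first | rfl | omega | (exfalso; omega) | exact (‹False›).elim | ring

lemma row_last (n : ℕ) (hn : 2 ≤ n) (i : Fin (2 * n + 2)) (hi : (i : ℕ) = n - 1) :
    (wprod n 1 (wordQ1 n)) i = fun j : Fin (2 * n + 2) =>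
      if (j : ℕ) = 0 then -X 1 else if (j : ℕ) = n - 1 then 1 else 0 := by
  rw [← single_vecMul' i (wprod n 1 (wordQ1 n)), wordQ1_eq n hn, ← Matrix.vecMul_vecMul, ← Matrix.vecMul_vecMul,
    ← Matrix.vecMul_vecMul, single_eq_ite]
  have h1 : ((fun j : Fin (2 * n + 2) => if (j : ℕ) = (i : ℕ) then (1 : Rp) else 0)
      ᵥ* gMat n 0 (X 1)) = fun j : Fin (2 * n + 2) =>
      if (j : ℕ) + 1 = n then (-X 1 : Rp) else if (j : ℕ) + 1 = n + 2 then 1 else 0 := by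
    rw [vecMul_gMat_zero (by omega)]
    funext j
    dsimp only
    try simp only [Fin.val_mk]
    split_ifs <;> first | rfl | omega | (exfalso; omega) | exact (‹False›).elim | ring
  rw [h1]
  have h2 := desc_move n hn (n - 1) 2 (n + 2) (-X 1) 1 le_rfl (by omega) le_rfl
  rw [show n - 1 + 1 = n from by omega] at h2
  rw [h2,
    noop_word n (ascWord 2 (n - 1)) _
      (fun a ha => by have := ascWord_mem _ _ _ ha; omega)
      (fun a ha j hj => by
        have := ascWord_mem _ _ _ ha
        rw [if_neg (by omega), if_neg (by omega)]) (n + 1)]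
  rw [vecMul_gMat_zero (by omega)]
  funext j
  dsimp only
  try simp only [Fin.val_mk]
  split_ifs <;> first | rfl | omega | (exfalso; omega) | exact (‹False›).elim | ring

lemma MQ_entry (n : ℕ) (hn : 2 ≤ n) (i j : Fin (2 * n + 2)) (hi : (i : ℕ) < n)
    (hj : (j : ℕ) < n) :
    MQ n (wordQ1 n) i j =
      if (i : ℕ) = 0 then -X (n + (j : ℕ))
      else if (j : ℕ) = 0 then -X (n - (i : ℕ))
      else if (j : ℕ) = (i : ℕ) then 1 else 0 := by
  rw [MQ_eq_wprod]
  by_cases h0 : (i : ℕ) = 0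
  · rw [show (wprod n 1 (wordQ1 n)) i j = ((wprod n 1 (wordQ1 n)) i) j from rfl,
      row_zero n hn i h0]
    dsimp only
    split_ifs <;> first | rfl | omega | (exfalso; omega) | exact (‹False›).elim
  · by_cases hlast : (i : ℕ) = n - 1
    · rw [show (wprod n 1 (wordQ1 n)) i j = ((wprod n 1 (wordQ1 n)) i) j from rfl,
        row_last n hn i hlast]
      dsimp only
      split_ifs <;> first | rfl | omega | (exfalso; omega) | exact (‹False›).elim | (rw [show n - (i : ℕ) = 1 from by omega])
    · rw [show (wprod n 1 (wordQ1 n)) i j = ((wprod n 1 (wordQ1 n)) i) j from rfl,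
        row_mid n hn i (by omega) (by omega)]
      dsimp only
      split_ifs <;> first | rfl | omega | (exfalso; omega) | exact (‹False›).elim

end Rows
section Det
local notation "Rp" => MvPolynomial ℕ ℤ

/-- The northwest corner matrix. -/
noncomputable def Cmat (n α : ℕ) : Matrix (Fin α) (Fin α) Rp :=
  Matrix.of fun i j =>
    if (i : ℕ) = 0 then -X (n + (j : ℕ))
    else if (j : ℕ) = 0 then -X (n - (i : ℕ))
    else if (j : ℕ) = (i : ℕ) then 1 else 0

lemma det_minor0 (n m : ℕ) :
    (Matrix.of fun i j : Fin (m + 1) =>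
      if (i : ℕ) = 0 then (-X (n + ((j : ℕ) + 1)) : Rp)
      else if (i : ℕ) = (j : ℕ) + 1 then 1 else 0).det
    = (-1) ^ m * (-X (n + (m + 1))) := by
  rw [Matrix.det_succ_column _ (Fin.last m)]
  rw [Finset.sum_eq_single (0 : Fin (m + 1))]
  · have hB : (Matrix.of fun i j : Fin (m + 1) =>
        if (i : ℕ) = 0 then (-X (n + ((j : ℕ) + 1)) : Rp)
        else if (i : ℕ) = (j : ℕ) + 1 then 1 else 0).submatrix
          (Fin.succAbove 0) (Fin.succAbove (Fin.last m)) = 1 := by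
      refine Matrix.ext fun i j => ?_
      simp only [Matrix.submatrix_apply, Fin.succAbove_zero, Fin.succAbove_last,
        Matrix.of_apply, Fin.val_succ, Fin.coe_castSucc, Matrix.one_apply, Fin.ext_iff]
      split_ifs <;> first | rfl | omega | exact (‹False›).elim | (exfalso; omega)
    rw [hB, Matrix.det_one, mul_one]
    simp only [Matrix.of_apply, Fin.val_zero, Fin.val_last]
    norm_num
  · intro b _ hb
    have hb0 : (b : ℕ) ≠ 0 := fun h => hb (Fin.ext h)
    have hlt : (b : ℕ) < m + 1 := b.isLt
    simp only [Matrix.of_apply, Fin.val_last]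
    rw [if_neg hb0, if_neg (by omega)]
    ring
  · intro h
    exact absurd (Finset.mem_univ _) h

lemma det_Cmat (n : ℕ) : ∀ α, 1 ≤ α →
    (Cmat n α).det = -(X n + ∑ k ∈ Finset.Icc 1 (α - 1), X (n - k) * X (n + k)) := by
  intro α
  induction α with
  | zero => omega
  | succ m ih =>
      intro _
      rcases Nat.eq_zero_or_pos m with hm | hm
      · subst hm
        rw [show (Cmat n 1).det = Cmat n 1 0 0 from Matrix.det_fin_one _]
        simp [Cmat]
      · -- m ≥ 1, α = m + 1
        obtain ⟨m', rfl⟩ : ∃ m', m = m' + 1 := ⟨m - 1, by omega⟩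
        rw [Matrix.det_succ_row _ (Fin.last (m' + 1))]
        rw [← Finset.sum_subset
          (Finset.subset_univ ({0, Fin.last (m' + 1)} : Finset (Fin (m' + 2))))]
        · rw [Finset.sum_pair (by simp [Fin.ext_iff])]
          have hC0 : Cmat n (m' + 2) (Fin.last (m' + 1)) 0 = -X (n - (m' + 1)) := by
            simp [Cmat, Fin.val_last]
          have hClast : Cmat n (m' + 2) (Fin.last (m' + 1)) (Fin.last (m' + 1)) = 1 := by
            simp [Cmat, Fin.val_last]
          have hminor_last : (Cmat n (m' + 2)).submatrix
              (Fin.succAbove (Fin.last (m' + 1))) (Fin.succAbove (Fin.last (m' + 1)))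
              = Cmat n (m' + 1) := by
            refine Matrix.ext fun i j => ?_
            simp only [Matrix.submatrix_apply, Fin.succAbove_last, Cmat, Matrix.of_apply,
              Fin.coe_castSucc]
          have hminor0 : (Cmat n (m' + 2)).submatrix
              (Fin.succAbove (Fin.last (m' + 1))) (Fin.succAbove 0)
              = Matrix.of fun i j : Fin (m' + 1) =>
                if (i : ℕ) = 0 then (-X (n + ((j : ℕ) + 1)) : Rp)
                else if (i : ℕ) = (j : ℕ) + 1 then 1 else 0 := by
            refine Matrix.ext fun i j => ?_
            simp only [Matrix.submatrix_apply, Fin.succAbove_last, Fin.succAbove_zero,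
              Cmat, Matrix.of_apply, Fin.coe_castSucc, Fin.val_succ]
            split_ifs <;> first | rfl | omega | exact (‹False›).elim | (exfalso; omega)
          rw [hC0, hClast, hminor_last, hminor0, det_minor0, ih (by omega)]
          rw [show (m' + 1 + 1) - 1 = m' + 1 from rfl, show (m' + 1) - 1 = m' from rfl]
          rw [Finset.sum_Icc_succ_top (by omega : 1 ≤ m' + 1)]
          rw [Fin.val_zero, Fin.val_last]
          have hsgn : ((-1 : Rp)) ^ (m' + 1 + 0) * (-1) ^ m' = -1 := by
            rw [← pow_add]
            exact Odd.neg_one_pow ⟨m', by ring⟩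
          have hsgn2 : ((-1 : Rp)) ^ (m' + 1 + (m' + 1)) = 1 :=
            Even.neg_one_pow ⟨m' + 1, by ring⟩
          rw [hsgn2, show n + (m' + 1) = n + m' + 1 from by omega]
          linear_combination (X (n - (m' + 1)) * X (n + m' + 1)) * hsgn
        · intro x _ hx
          simp only [Finset.mem_insert, Finset.mem_singleton, not_or] at hx
          have h1 : Cmat n (m' + 2) (Fin.last (m' + 1)) x = 0 := by
            simp only [Cmat, Matrix.of_apply, Fin.val_last]
            split_ifs <;>
              first
                | rfl | omega | exact (‹False›).elim
                | exact absurd (Fin.ext ‹(x : ℕ) = 0›) hx.1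
                | exact absurd (Fin.ext ‹(x : ℕ) = m' + 1›) hx.2
          rw [h1]
          ring

end Det


/-- computational core of Proposition 2: for `M = M_{Q_1}` and
`1 ≤ α ≤ n`, the determinant of the northwest `α × α` submatrix of `M` equals
`-(z_n + Σ_{k=1}^{α-1} z_{n-k} z_{n+k})`. -/
theorem nwDet_MQ_wordQ1 (n : ℕ) (hn : 2 ≤ n) (α : ℕ) (hα1 : 1 ≤ α) (hαn : α ≤ n) :
    nwDet (MQ n (wordQ1 n)) α (by omega) =
      -(X n + ∑ k ∈ Finset.Icc 1 (α - 1), X (n - k) * X (n + k)) := by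
  have hsub : (MQ n (wordQ1 n)).submatrix
      (Fin.castLE (show α ≤ 2 * n + 2 by omega)) (Fin.castLE (show α ≤ 2 * n + 2 by omega))
      = Cmat n α := by
    refine Matrix.ext fun i j => ?_
    rw [Matrix.submatrix_apply]
    rw [MQ_entry n hn _ _ (by simp only [Fin.coe_castLE]; omega)
      (by simp only [Fin.coe_castLE]; omega)]
    simp only [Cmat, Matrix.of_apply, Fin.coe_castLE]
  unfold nwDet
  rw [hsub, det_Cmat n α hα1]
end

section
/- Fix 1 ≤ i ≤ n-1 and let M = M_{Q^{(i)}} over ℤ[z_1,…,z_{2n-1}] for the word Q^{(i)} = (i, i-1, …, 1, 2, 3, …, n-1, 0, n, n-1, …, i+1). Then for every 1 ≤ α ≤ i, the determinant of the northwest α×α submatrix of M (rows and columns {1,…,α}) equals -(z_i + Σ_{k=1}^{α-1} z_{i-k} z_{i+k}). (Computational core of Proposition 4 for 1 ≤ α ≤ i.) -/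
open Matrix MvPolynomial

namespace NWAux

/-- 1-based basis vector `e_c` (zero if `c` out of range). -/
noncomputable def E (n c : ℕ) : Fin (2 * n + 2) → MvPolynomial ℕ ℤ :=
  fun a => if (a : ℕ) + 1 = c then 1 else 0

lemma mulVec_E (n : ℕ) (A : Matrix (Fin (2*n+2)) (Fin (2*n+2)) (MvPolynomial ℕ ℤ))
    (c : ℕ) (hc1 : 1 ≤ c) (hc2 : c ≤ 2*n+2) (a : Fin (2*n+2)) :
    (A *ᵥ E n c) a = A a ⟨c-1, by omega⟩ := by
  simp only [Matrix.mulVec, dotProduct, E]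
  rw [Finset.sum_eq_single (⟨c-1, by omega⟩ : Fin (2*n+2))]
  · simp only [Fin.val_mk]
    rw [if_pos (by omega), mul_one]
  · intro b _ hb
    rw [if_neg, mul_zero]
    intro hb'
    exact hb (Fin.ext (by simp only [Fin.val_mk]; omega))
  · intro h; exact absurd (Finset.mem_univ _) h

lemma gE_self (n β : ℕ) (hβ1 : 1 ≤ β) (hβn : β ≤ n) (z : MvPolynomial ℕ ℤ) :
    gMat n β z *ᵥ E n β = -z • E n β + E n (β+1) := by
  funext a
  rw [mulVec_E n _ β hβ1 (by omega)]
  simp only [gMat, Matrix.of_apply, Fin.val_mk, Pi.add_apply, Pi.smul_apply, smul_eq_mul, E]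
  have h : β - 1 + 1 = β := by omega
  rw [h]
  split_ifs <;> first | ring1 | (exfalso; omega)

lemma gE_succ (n β : ℕ) (hβ1 : 1 ≤ β) (hβn : β ≤ n) (z : MvPolynomial ℕ ℤ) :
    gMat n β z *ᵥ E n (β+1) = E n β := by
  funext a
  rw [mulVec_E n _ (β+1) (by omega) (by omega)]
  simp only [gMat, Matrix.of_apply, Fin.val_mk, E]
  have h : β + 1 - 1 + 1 = β + 1 := by omega
  rw [h]
  split_ifs <;> first | ring1 | (exfalso; omega)

lemma gE_other (n β c : ℕ) (hβ1 : 1 ≤ β) (hβn : β ≤ n) (hc1 : 1 ≤ c) (hc2 : c ≤ n+1)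
    (h1 : c ≠ β) (h2 : c ≠ β + 1) (z : MvPolynomial ℕ ℤ) :
    gMat n β z *ᵥ E n c = E n c := by
  funext a
  rw [mulVec_E n _ c hc1 (by omega)]
  simp only [gMat, Matrix.of_apply, Fin.val_mk, E]
  have h : c - 1 + 1 = c := by omega
  rw [h]
  split_ifs <;> first | ring1 | (exfalso; omega)

lemma g0E (n c : ℕ) (hn : 2 ≤ n) (hc1 : 1 ≤ c) (hc2 : c ≤ n - 1) (z : MvPolynomial ℕ ℤ) :
    gMat n 0 z *ᵥ E n c = E n c := by
  funext a
  rw [mulVec_E n _ c hc1 (by omega)]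
  simp only [gMat, Matrix.of_apply, Fin.val_mk, E]
  have h : c - 1 + 1 = c := by omega
  rw [h]
  split_ifs <;> first | ring1 | (exfalso; omega)

end NWAux

namespace NWAux


/-- Product of `gMat`s along a word, with variables starting at index `t`. -/
noncomputable def Pw (n : ℕ) : List ℕ → ℕ → Matrix (Fin (2*n+2)) (Fin (2*n+2)) (MvPolynomial ℕ ℤ)
  | [], _ => 1
  | β :: Q, t => gMat n β (X t) * Pw n Q (t+1)

lemma Pw_nil (n t : ℕ) : Pw n [] t = 1 := rfl

lemma Pw_cons (n β t : ℕ) (Q : List ℕ) :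
    Pw n (β :: Q) t = gMat n β (X t) * Pw n Q (t+1) := rfl

lemma Pw_append (n : ℕ) (Q1 Q2 : List ℕ) : ∀ t,
    Pw n (Q1 ++ Q2) t = Pw n Q1 t * Pw n Q2 (t + Q1.length) := by
  induction Q1 with
  | nil => intro t; simp [Pw_nil]
  | cons β Q ih =>
      intro t
      have h : t + 1 + Q.length = t + (Q.length + 1) := by omega
      simp only [List.cons_append, Pw_cons, ih (t+1), List.length_cons, Matrix.mul_assoc, h]

lemma ofFn_prod_eq_Pw (n : ℕ) (Q : List ℕ) : ∀ t,
    (List.ofFn (fun l : Fin Q.length => gMat n (Q.get l) (X ((l : ℕ) + t)))).prod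
      = Pw n Q t := by
  induction Q with
  | nil => intro t; simp [Pw_nil]
  | cons β Q ih =>
      intro t
      rw [List.ofFn_succ]
      simp only [List.prod_cons, List.get, Fin.val_succ, Pw_cons, Fin.val_zero, zero_add]
      congr 1
      rw [← ih (t+1)]
      refine congrArg List.prod (congrArg List.ofFn (funext fun l => ?_))
      have h2 : (l : ℕ) + 1 + t = (l : ℕ) + (t + 1) := by omega
      rw [h2]
      rfl

lemma descWord_cons (a b : ℕ) (hb : 1 ≤ b) (h : b ≤ a) : descWord a b = a :: descWord (a-1) b := by
  unfold descWord
  have h1 : a + 1 - b = (a - b) + 1 := by omega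
  have h2 : (a - 1) + 1 - b = a - b := by omega
  rw [h1, h2, List.range_succ, List.reverse_append, List.reverse_singleton]
  simp only [List.singleton_append, List.map_cons]
  congr 1
  omega

lemma descWord_nil (a b : ℕ) (h : a < b) : descWord a b = [] := by
  unfold descWord
  have : a + 1 - b = 0 := by omega
  simp [this]

lemma ascWord_cons (a b : ℕ) (h : a ≤ b) : ascWord a b = a :: ascWord (a+1) b := by
  unfold ascWord
  have h1 : b + 1 - a = (b - a) + 1 := by omega
  have h2 : b + 1 - (a + 1) = b - a := by omega
  rw [h1, h2, List.range_succ_eq_map, List.map_cons, List.map_map]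
  congr 1
  · omega
  · apply List.map_congr_left
    intro x _
    simp only [Function.comp_apply]
    omega

lemma ascWord_nil (a b : ℕ) (h : b < a) : ascWord a b = [] := by
  unfold ascWord
  have : b + 1 - a = 0 := by omega
  simp [this]

lemma mem_descWord (a b β : ℕ) (h : β ∈ descWord a b) : b ≤ β ∧ β ≤ a := by
  unfold descWord at h
  simp only [List.mem_map, List.mem_reverse, List.mem_range] at h
  obtain ⟨x, hx, rfl⟩ := h
  omega

lemma mem_ascWord (a b β : ℕ) (h : β ∈ ascWord a b) : a ≤ β ∧ β ≤ b := by
  unfold ascWord at h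
  simp only [List.mem_map, List.mem_range] at h
  obtain ⟨x, hx, rfl⟩ := h
  omega

lemma length_descWord (a b : ℕ) : (descWord a b).length = a + 1 - b := by
  simp [descWord]

lemma length_ascWord (a b : ℕ) : (ascWord a b).length = b + 1 - a := by
  simp [ascWord]

/-- A word whose letters avoid column `c` fixes `E n c`. -/
lemma Pw_fix (n : ℕ) (hn : 2 ≤ n) (c : ℕ) (hc1 : 1 ≤ c) (hc2 : c ≤ n+1) :
    ∀ (Q : List ℕ), (∀ β ∈ Q, (β = 0 → c ≤ n - 1) ∧ (1 ≤ β → β ≤ n ∧ c ≠ β ∧ c ≠ β + 1)) →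
    ∀ t, Pw n Q t *ᵥ E n c = E n c := by
  intro Q
  induction Q with
  | nil => intro _ t; simp [Pw_nil, Matrix.one_mulVec]
  | cons β Q ih =>
      intro hQ t
      rw [Pw_cons, ← Matrix.mulVec_mulVec, ih (fun β' hβ' => hQ β' (List.mem_cons_of_mem _ hβ')) (t+1)]
      have hβ := hQ β List.mem_cons_self
      rcases Nat.eq_zero_or_pos β with h0 | h1
      · subst h0
        exact g0E n c hn hc1 (hβ.1 rfl) _
      · obtain ⟨hβn, hc3, hc4⟩ := hβ.2 h1
        exact gE_other n β c h1 hβn hc1 hc2 hc3 hc4 _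

end NWAux

namespace NWAux

lemma mulVec_sum (n : ℕ) (A : Matrix (Fin (2*n+2)) (Fin (2*n+2)) (MvPolynomial ℕ ℤ))
    (s : Finset ℕ) (f : ℕ → Fin (2*n+2) → MvPolynomial ℕ ℤ) :
    A *ᵥ (∑ k ∈ s, f k) = ∑ k ∈ s, A *ᵥ f k := by
  simpa only [Matrix.mulVecLin_apply] using map_sum (Matrix.mulVecLin A) f s

/-- Ascending run `(a, a+1, …, n-1)` applied to `E c`, for `a ≤ c ≤ n-1`. -/
lemma Pw_asc (n : ℕ) (hn : 2 ≤ n) : ∀ (k a t c : ℕ), 2 ≤ a → c = a + k → c ≤ n - 1 →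
    Pw n (ascWord a (n-1)) t *ᵥ E n c = -(X (t+k) : MvPolynomial ℕ ℤ) • E n a + E n (c+1) := by
  intro k
  induction k with
  | zero =>
      intro a t c ha hc hcn
      have hca : c = a := by omega
      subst hca
      have hfix : ∀ β ∈ ascWord (c+1) (n-1), (β = 0 → c ≤ n - 1) ∧ (1 ≤ β → β ≤ n ∧ c ≠ β ∧ c ≠ β + 1) := by
        intro β hβ
        have := mem_ascWord _ _ _ hβ
        exact ⟨fun _ => by omega, fun _ => by omega⟩
      rw [ascWord_cons c (n-1) (by omega), Pw_cons, ← Matrix.mulVec_mulVec,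
        Pw_fix n hn c (by omega) (by omega) _ hfix (t+1)]
      simp only [Nat.add_zero]
      exact gE_self n c (by omega) (by omega) _
  | succ k ih =>
      intro a t c ha hc hcn
      rw [ascWord_cons a (n-1) (by omega), Pw_cons, ← Matrix.mulVec_mulVec]
      rw [ih (a+1) (t+1) c (by omega) (by omega) hcn]
      rw [Matrix.mulVec_add, Matrix.mulVec_smul]
      rw [gE_succ n a (by omega) (by omega), gE_other n a (c+1) (by omega) (by omega) (by omega) (by omega) (by omega) (by omega)]
      have h2 : t + 1 + k = t + (k+1) := by omega
      rw [h2]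

/-- Descending run `(a, a-1, …, 1)` applied to `E c` for `2 ≤ c ≤ a+1`. -/
lemma Pw_desc_shift (n : ℕ) (hn : 2 ≤ n) : ∀ (a t c : ℕ), 2 ≤ c → c ≤ a + 1 → a ≤ n - 1 →
    Pw n (descWord a 1) t *ᵥ E n c = E n (c-1) := by
  intro a
  induction a with
  | zero => intro t c hc1 hc2 _; omega
  | succ a ih =>
      intro t c hc1 hc2 han
      rw [descWord_cons (a+1) 1 (by omega) (by omega), Pw_cons, ← Matrix.mulVec_mulVec]
      simp only [Nat.add_sub_cancel]
      rcases Nat.lt_or_ge c (a+2) with h | h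
      · rw [ih (t+1) c hc1 (by omega) (by omega)]
        exact gE_other n (a+1) (c-1) (by omega) (by omega) (by omega) (by omega) (by omega) (by omega) _
      · have hc : c = a + 2 := by omega
        subst hc
        rw [Pw_fix n hn (a+2) (by omega) (by omega) _ ?_ (t+1)]
        · have : a + 2 - 1 = a + 1 := by omega
          rw [this]
          exact gE_succ n (a+1) (by omega) (by omega) _
        · intro β hβ
          have := mem_descWord _ _ _ hβ
          constructor
          · omega
          · intro _; omega

/-- Descending run `(a, a-1, …, 1)` applied to `E 1`. -/
lemma Pw_desc_one (n : ℕ) (hn : 2 ≤ n) : ∀ (a t : ℕ), a ≤ n - 1 →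
    Pw n (descWord a 1) t *ᵥ E n 1
      = E n (a+1) - ∑ k ∈ Finset.Icc 1 a, (X (t+a-k) : MvPolynomial ℕ ℤ) • E n k := by
  intro a
  induction a with
  | zero =>
      intro t _
      rw [descWord_nil 0 1 (by omega), Pw_nil, Matrix.one_mulVec]
      simp
  | succ a ih =>
      intro t han
      rw [descWord_cons (a+1) 1 (by omega) (by omega), Pw_cons, ← Matrix.mulVec_mulVec]
      simp only [Nat.add_sub_cancel]
      rw [ih (t+1) (by omega)]
      rw [Matrix.mulVec_sub, mulVec_sum n]
      rw [gE_self n (a+1) (by omega) (by omega)]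
      have hsum : ∀ k ∈ Finset.Icc 1 a,
          gMat n (a+1) (X t) *ᵥ ((X (t+1+a-k) : MvPolynomial ℕ ℤ) • E n k) = (X (t+(a+1)-k) : MvPolynomial ℕ ℤ) • E n k := by
        intro k hk
        simp only [Finset.mem_Icc] at hk
        rw [Matrix.mulVec_smul,
          gE_other n (a+1) k (by omega) (by omega) (by omega) (by omega) (by omega) (by omega)]
        have : t + 1 + a - k = t + (a+1) - k := by omega
        rw [this]
      rw [Finset.sum_congr rfl hsum]
      rw [Finset.sum_Icc_succ_top (by omega : 1 ≤ a + 1)]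
      have : t + (a+1) - (a+1) = t := by omega
      rw [this, neg_smul]
      abel

lemma MQ_eq_Pw (n : ℕ) (Q : List ℕ) : MQ n Q = Pw n Q 1 := ofFn_prod_eq_Pw n Q 1

lemma MQ_col (n i b : ℕ) (hn : 2 ≤ n) (hi1 : 1 ≤ i) (hin : i ≤ n - 1)
    (hb1 : 1 ≤ b) (hbi : b ≤ i) :
    MQ n (wordQi n i) *ᵥ E n b =
      Pw n (descWord i 1) 1 *ᵥ (Pw n (ascWord 2 (n-1)) (1+i) *ᵥ E n b) := by
  rw [MQ_eq_Pw]
  unfold wordQi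
  rw [Pw_append, Pw_append, Pw_append]
  rw [← Matrix.mulVec_mulVec, ← Matrix.mulVec_mulVec, ← Matrix.mulVec_mulVec]
  have hfix2 : ∀ β ∈ descWord n (i+1), (β = 0 → b ≤ n - 1) ∧ (1 ≤ β → β ≤ n ∧ b ≠ β ∧ b ≠ β + 1) := by
    intro β hβ
    have := mem_descWord _ _ _ hβ
    exact ⟨fun _ => by omega, fun _ => by omega⟩
  rw [Pw_fix n hn b (by omega) (by omega) _ hfix2]
  rw [Pw_cons, Pw_nil, mul_one, g0E n b hn (by omega) (by omega)]
  have hl : 1 + (descWord i 1).length = 1 + i := by rw [length_descWord]; omega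
  rw [hl]

lemma MQ_col_one (n i : ℕ) (hn : 2 ≤ n) (hi1 : 1 ≤ i) (hin : i ≤ n - 1) :
    MQ n (wordQi n i) *ᵥ E n 1 =
      E n (i+1) - ∑ k ∈ Finset.Icc 1 i, (X (1+i-k) : MvPolynomial ℕ ℤ) • E n k := by
  rw [MQ_col n i 1 hn hi1 hin (by omega) (by omega)]
  have hfix : ∀ β ∈ ascWord 2 (n-1), (β = 0 → 1 ≤ n - 1) ∧ (1 ≤ β → β ≤ n ∧ 1 ≠ β ∧ 1 ≠ β + 1) := by
    intro β hβ
    have := mem_ascWord _ _ _ hβ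
    exact ⟨fun _ => by omega, fun _ => by omega⟩
  rw [Pw_fix n hn 1 (by omega) (by omega) _ hfix]
  have := Pw_desc_one n hn i 1 hin
  rw [this]

lemma MQ_col_other (n i b : ℕ) (hn : 2 ≤ n) (hi1 : 1 ≤ i) (hin : i ≤ n - 1)
    (hb1 : 2 ≤ b) (hbi : b ≤ i) :
    MQ n (wordQi n i) *ᵥ E n b =
      -(X (i+b-1) : MvPolynomial ℕ ℤ) • E n 1 + E n b := by
  rw [MQ_col n i b hn hi1 hin (by omega) hbi]
  rw [Pw_asc n hn (b-2) 2 (1+i) b (by omega) (by omega) (by omega)]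
  rw [Matrix.mulVec_add, Matrix.mulVec_smul]
  rw [Pw_desc_shift n hn i 1 2 (by omega) (by omega) (by omega)]
  rw [Pw_desc_shift n hn i 1 (b+1) (by omega) (by omega) (by omega)]
  have h1 : 1 + i + (b-2) = i + b - 1 := by omega
  have h2 : (2:ℕ) - 1 = 1 := by omega
  have h3 : b + 1 - 1 = b := by omega
  rw [h1, h2, h3]

lemma entry_eq (n : ℕ) (A : Matrix (Fin (2*n+2)) (Fin (2*n+2)) (MvPolynomial ℕ ℤ))
    (a j : Fin (2*n+2)) : A a j = (A *ᵥ E n ((j:ℕ)+1)) a := by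
  rw [mulVec_E n A ((j:ℕ)+1) (by omega) (by omega)]
  exact congrArg (A a) (Fin.ext (by simp))


lemma col_one_entry (n i : ℕ) (hn : 2 ≤ n) (hi1 : 1 ≤ i) (hin : i ≤ n-1)
    (a : Fin (2*n+2)) (ha : (a:ℕ) + 1 ≤ i) :
    (MQ n (wordQi n i) *ᵥ E n 1) a = -X (i - (a:ℕ)) := by
  rw [MQ_col_one n i hn hi1 hin]
  simp only [Pi.sub_apply, Finset.sum_apply, Pi.smul_apply, smul_eq_mul, E]
  rw [if_neg (by omega : ¬ ((a:ℕ) + 1 = i + 1))]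
  rw [Finset.sum_eq_single ((a:ℕ)+1)]
  · rw [if_pos rfl, mul_one]
    have h : 1 + i - ((a:ℕ)+1) = i - (a:ℕ) := by omega
    rw [h, zero_sub]
  · intro c _ hc
    rw [if_neg (by omega), mul_zero]
  · intro hmem
    exact absurd (Finset.mem_Icc.mpr (by omega)) hmem

lemma col_other_entry (n i b : ℕ) (hn : 2 ≤ n) (hi1 : 1 ≤ i) (hin : i ≤ n-1)
    (hb1 : 2 ≤ b) (hbi : b ≤ i) (a : Fin (2*n+2)) :
    (MQ n (wordQi n i) *ᵥ E n b) a =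
      (if (a:ℕ) = 0 then -X (i + b - 1) else 0) + (if (a:ℕ) + 1 = b then 1 else 0) := by
  rw [MQ_col_other n i b hn hi1 hin hb1 hbi]
  simp only [Pi.add_apply, Pi.neg_apply, Pi.smul_apply, smul_eq_mul, E, neg_smul]
  by_cases h0 : (a:ℕ) = 0
  · rw [if_pos (by omega : (a:ℕ) + 1 = 1), if_pos h0, mul_one]
  · rw [if_neg (by omega : ¬ ((a:ℕ) + 1 = 1)), if_neg h0, mul_zero, neg_zero]


end NWAux


/-- computational core of Proposition 4 for `1 ≤ α ≤ i`. -/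
theorem nwDet_MQ_wordQi_small (n : ℕ) (hn : 2 ≤ n) (i : ℕ) (hi1 : 1 ≤ i)
    (hin : i ≤ n - 1) (α : ℕ) (hα1 : 1 ≤ α) (hαi : α ≤ i) :
    nwDet (MQ n (wordQi n i)) α (by omega) =
      -(X i + ∑ k ∈ Finset.Icc 1 (α - 1), X (i - k) * X (i + k)) := by
  classical
  haveI : NeZero α := ⟨by omega⟩
  set U : Matrix (Fin α) (Fin 2) (MvPolynomial ℕ ℤ) :=
    Matrix.of fun k => ![-X (i - (k:ℕ)) - (if (k:ℕ) = 0 then 1 else 0),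
      if (k:ℕ) = 0 then 1 else 0] with hU
  set W : Matrix (Fin 2) (Fin α) (MvPolynomial ℕ ℤ) :=
    Matrix.of ![fun b => if (b:ℕ) = 0 then 1 else 0,
      fun b => if (b:ℕ) = 0 then 0 else -X (i + (b:ℕ))] with hW
  have hUapp0 : ∀ k : Fin α, U k 0 = -X (i - (k:ℕ)) - (if (k:ℕ) = 0 then 1 else 0) := by
    intro k; simp [hU]
  have hUapp1 : ∀ k : Fin α, U k 1 = (if (k:ℕ) = 0 then 1 else 0) := by
    intro k; simp [hU]
  have hWapp0 : ∀ b : Fin α, W 0 b = (if (b:ℕ) = 0 then 1 else 0) := by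
    intro b; simp [hW]
  have hWapp1 : ∀ b : Fin α, W 1 b = (if (b:ℕ) = 0 then 0 else -X (i + (b:ℕ))) := by
    intro b; simp [hW]
  have hS : ∀ (h : α ≤ 2*n+2),
      (MQ n (wordQi n i)).submatrix (Fin.castLE h) (Fin.castLE h) = 1 + U * W := by
    intro h
    refine Matrix.ext fun k b => ?_
    rw [Matrix.submatrix_apply,
      NWAux.entry_eq n (MQ n (wordQi n i)) (Fin.castLE h k) (Fin.castLE h b)]
    have hRHS : (1 + U * W : Matrix (Fin α) (Fin α) (MvPolynomial ℕ ℤ)) k b =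
        (if (k:ℕ) = (b:ℕ) then 1 else 0)
          + ((-X (i - (k:ℕ)) - (if (k:ℕ) = 0 then 1 else 0)) * (if (b:ℕ) = 0 then 1 else 0)
          + (if (k:ℕ) = 0 then 1 else 0) * (if (b:ℕ) = 0 then 0 else -X (i + (b:ℕ)))) := by
      rw [Matrix.add_apply, Matrix.mul_apply, Fin.sum_univ_two, hUapp0, hUapp1, hWapp0, hWapp1,
        Matrix.one_apply]
      congr 1
      simp [Fin.ext_iff]
    rw [hRHS]
    have hkα : (k:ℕ) < α := k.isLt
    have hbα : (b:ℕ) < α := b.isLt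
    simp only [Fin.coe_castLE]
    rcases Nat.eq_zero_or_pos (b:ℕ) with hb | hb
    · rw [show (b:ℕ) + 1 = 1 by omega]
      rw [NWAux.col_one_entry n i hn hi1 hin _ (by simp only [Fin.coe_castLE]; omega)]
      simp only [Fin.coe_castLE]
      split_ifs <;> first | ring1 | (exfalso; omega)
    · rw [NWAux.col_other_entry n i ((b:ℕ)+1) hn hi1 hin (by omega) (by omega)]
      simp only [Fin.coe_castLE]
      rw [show i + ((b:ℕ)+1) - 1 = i + (b:ℕ) by omega]
      split_ifs <;> first | ring1 | (exfalso; omega)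
  unfold nwDet
  rw [hS _, Matrix.det_one_add_mul_comm, Matrix.det_fin_two]
  have e00 : (1 + W * U : Matrix (Fin 2) (Fin 2) (MvPolynomial ℕ ℤ)) 0 0 = -X i := by
    rw [Matrix.add_apply, Matrix.one_apply_eq, Matrix.mul_apply]
    rw [Finset.sum_eq_single (0 : Fin α)]
    · rw [hWapp0, hUapp0]
      simp
    · intro c _ hc
      rw [hWapp0, if_neg (fun h => hc (Fin.ext (by simpa using h))), zero_mul]
    · intro hmem; exact absurd (Finset.mem_univ _) hmem
  have e01 : (1 + W * U : Matrix (Fin 2) (Fin 2) (MvPolynomial ℕ ℤ)) 0 1 = 1 := by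
    rw [Matrix.add_apply, Matrix.one_apply_ne (by decide), Matrix.mul_apply]
    rw [Finset.sum_eq_single (0 : Fin α)]
    · rw [hWapp0, hUapp1]
      simp
    · intro c _ hc
      rw [hWapp0, if_neg (fun h => hc (Fin.ext (by simpa using h))), zero_mul]
    · intro hmem; exact absurd (Finset.mem_univ _) hmem
  have e11 : (1 + W * U : Matrix (Fin 2) (Fin 2) (MvPolynomial ℕ ℤ)) 1 1 = 1 := by
    rw [Matrix.add_apply, Matrix.one_apply_eq, Matrix.mul_apply]
    rw [Finset.sum_eq_zero, add_zero]
    intro c _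
    rw [hWapp1, hUapp1]
    by_cases h : (c:ℕ) = 0 <;> simp [h]
  have e10 : (1 + W * U : Matrix (Fin 2) (Fin 2) (MvPolynomial ℕ ℤ)) 1 0 =
      ∑ k ∈ Finset.Icc 1 (α - 1), X (i - k) * X (i + k) := by
    rw [Matrix.add_apply, Matrix.one_apply_ne (by decide), Matrix.mul_apply, zero_add]
    have hterm : ∀ c : Fin α, W 1 c * U c 0 =
        (fun j : ℕ => if j = 0 then 0 else X (i - j) * X (i + j)) (c : ℕ) := by
      intro c
      rw [hWapp1, hUapp0]
      by_cases h : (c:ℕ) = 0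
      · simp [h]
      · simp only [h, if_neg h, if_false]
        ring1
    have hsum1 : ∑ c : Fin α, W 1 c * U c 0
        = ∑ j ∈ Finset.range α, (if j = 0 then 0 else X (i - j) * X (i + j)) := by
      rw [← Fin.sum_univ_eq_sum_range (fun j => if j = 0 then 0 else X (i - j) * X (i + j)) α]
      exact Finset.sum_congr rfl (fun c _ => hterm c)
    rw [hsum1, Finset.range_eq_Ico, Finset.sum_eq_sum_Ico_succ_bot (by omega : 0 < α),
      if_pos rfl, zero_add, show α = (α - 1) + 1 by omega, Finset.Ico_add_one_right_eq_Icc]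
    refine Finset.sum_congr rfl (fun j hj => ?_)
    rw [Finset.mem_Icc] at hj
    rw [if_neg (by omega)]
  rw [e00, e01, e10, e11]
  ring1
end
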